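/- arXiv:2207.05453 — 5 statements merged into one kernel-verified Lean document; each statement's English description precedes it below -/
import Mathlib

section
/- Let (G, F) be an F-sup-semilattice and j a prenucleus on (G, F). Then the set G_j of fixed points of j is a closure system on G (closed under arbitrary meets), and the associated closure operator n(j), defined by n(j)(a) = ⋀{x ∈ G_j | a ≤ x}, is a nucleus on (G, F); in particular F(n(j)(a)) ≤ n(j)(F(a)) for all a ∈ G. -/
theorem stmt_4 {G : Type*} [CompleteLattice G] (F j : G → G)
    (hF : ∀ X : Set G, F (sSup X) = sSup (F '' X))
    (hj : Monotone j) (hincr : ∀ a, a ≤ j a) (hlax : ∀ a, F (j a) ≤ j (F a)) :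
    (∀ M : Set G, (∀ a ∈ M, j a = a) → j (sInf M) = sInf M) ∧
    ∀ n : G → G, (∀ a, n a = sInf {x | j x = x ∧ a ≤ x}) →
      Monotone n ∧ (∀ a, a ≤ n a) ∧ (∀ a, n (n a) = n a) ∧ (∀ a, F (n a) ≤ n (F a)) := by
  have Fmono : Monotone F := by
    intro x y hxy
    have h : F y = sSup (F '' {x, y}) := by
      rw [← hF]
      congr 1
      simp [sSup_pair, sup_eq_right.mpr hxy]
    rw [h]
    exact le_sSup ⟨x, by simp⟩
  have part1 : ∀ M : Set G, (∀ a ∈ M, j a = a) → j (sInf M) = sInf M := by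
    intro M hM
    refine le_antisymm (le_sInf fun a ha => ?_) (hincr _)
    calc j (sInf M) ≤ j a := hj (sInf_le ha)
      _ = a := hM a ha
  refine ⟨part1, ?_⟩
  intro n hn
  have nfix : ∀ a, j (n a) = n a := fun a => by
    rw [hn]; exact part1 _ (fun x hx => hx.1)
  have nincr : ∀ a, a ≤ n a := fun a => by
    rw [hn]; exact le_sInf fun x hx => hx.2
  have nle : ∀ a x, j x = x → a ≤ x → n a ≤ x := fun a x h1 h2 => by
    rw [hn]; exact sInf_le ⟨h1, h2⟩
  have nmono : Monotone n := fun x y hxy => nle _ _ (nfix y) (hxy.trans (nincr y))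
  refine ⟨nmono, nincr, fun a => le_antisymm (nle _ _ (nfix a) le_rfl) (nincr _), ?_⟩
  intro a
  set D : Set G := {b | a ≤ b ∧ F b ≤ n (F a)} with hD
  set c := sSup D with hc
  have haD : a ∈ D := ⟨le_rfl, nincr _⟩
  have hac : a ≤ c := le_sSup haD
  have hFc : F c ≤ n (F a) := by
    rw [hc, hF]
    exact sSup_le (fun y ⟨b, hb, hby⟩ => hby ▸ hb.2)
  have hjc : j c ∈ D := ⟨hac.trans (hincr c), (hlax c).trans ((hj hFc).trans_eq (nfix _))⟩
  have hfix : j c = c := le_antisymm (le_sSup hjc) (hincr c)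
  exact (Fmono (nle a c hfix hac)).trans hFc
end

section
/- Let (G, F) be an F-sup-semilattice and X ⊆ G × G a set of pairs such that (F(c), F(d)) ∈ X whenever (c, d) ∈ X. Define j[X](a) = a ∨ ⋁{c ∈ G | ∃d, d ≤ a and ((c,d) ∈ X or (d,c) ∈ X)}. Then j[X] is a prenucleus on (G, F): it is order-preserving, increasing, and satisfies F(j[X](a)) ≤ j[X](F(a)) for all a ∈ G. -/
theorem stmt_5 {G : Type*} [CompleteLattice G] (F : G → G) (X : Set (G × G))
    (hF : ∀ Y : Set G, F (sSup Y) = sSup (F '' Y))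
    (hX : ∀ c d, (c, d) ∈ X → (F c, F d) ∈ X) :
    ∀ jX : G → G,
      (∀ a, jX a = a ⊔ sSup {c | ∃ d, d ≤ a ∧ ((c, d) ∈ X ∨ (d, c) ∈ X)}) →
      Monotone jX ∧ (∀ a, a ≤ jX a) ∧ (∀ a, F (jX a) ≤ jX (F a)) := by
  intro jX hj
  have hFmono : Monotone F := by
    intro x y hxy
    have : F (sSup {x, y}) = sSup (F '' {x, y}) := hF _
    simp only [sSup_pair, Set.image_pair, sup_eq_right.mpr hxy] at this
    rw [this]; exact le_sup_left
  refine ⟨?_, fun a => (hj a) ▸ le_sup_left, ?_⟩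
  · intro a b hab
    rw [hj a, hj b]
    apply sup_le_sup hab
    apply sSup_le_sSup
    rintro c ⟨d, hd, h⟩
    exact ⟨d, hd.trans hab, h⟩
  · intro a
    rw [hj a, hj (F a)]
    have h1 : F (a ⊔ sSup {c | ∃ d, d ≤ a ∧ ((c, d) ∈ X ∨ (d, c) ∈ X)})
        = F a ⊔ F (sSup {c | ∃ d, d ≤ a ∧ ((c, d) ∈ X ∨ (d, c) ∈ X)}) := by
      rw [← sSup_pair, hF, Set.image_pair, sSup_pair]
    rw [h1]
    apply sup_le_sup_left
    rw [hF]
    apply sSup_le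
    rintro x ⟨c, ⟨d, hd, h⟩, rfl⟩
    apply le_sSup
    exact ⟨F d, hFmono hd, h.imp (hX c d) (hX d c)⟩
end

section
/- Let (G, F) be an F-sup-semilattice, X ⊆ G × G with (F × F)(X) ⊆ X, j[X] the associated prenucleus and n(j[X]) the induced nucleus (closure to fixed points of j[X]). For every F-sup-semilattice (H, F_H) and every lax morphism g : G → H of F-sup-semilattices (g preserves all joins and F_H(g(a)) ≤ g(F(a))) such that g(c) = g(d) for all (c, d) ∈ X, there exists a unique lax morphism ḡ : G_{n(j[X])} → H of F-sup-semilattices with g = ḡ ∘ n(j[X]). -/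
theorem stmt_6 {G H : Type*} [CompleteLattice G] [CompleteLattice H]
    (F : G → G) (FH : H → H) (X : Set (G × G))
    (hF : ∀ Y : Set G, F (sSup Y) = sSup (F '' Y))
    (hFH : ∀ Y : Set H, FH (sSup Y) = sSup (FH '' Y))
    (hX : ∀ c d, (c, d) ∈ X → (F c, F d) ∈ X)
    (jX n : G → G)
    (hjX : ∀ a, jX a = a ⊔ sSup {c | ∃ d, d ≤ a ∧ ((c, d) ∈ X ∨ (d, c) ∈ X)})
    (hn : ∀ a, n a = sInf {x | jX x = x ∧ a ≤ x})
    (hidem : ∀ a, n (n a) = n a)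
    (g : G → H)
    (hg : ∀ Y : Set G, g (sSup Y) = sSup (g '' Y))
    (hglax : ∀ a, FH (g a) ≤ g (F a))
    (hgX : ∀ c d, (c, d) ∈ X → g c = g d) :
    ∃! gbar : {a : G // n a = a} → H,
      (∀ a : G, g a = gbar ⟨n a, hidem a⟩) ∧
      (∀ M : Set {a : G // n a = a},
        gbar ⟨n (sSup (Subtype.val '' M)), hidem _⟩ = sSup (gbar '' M)) ∧
      (∀ a : {a : G // n a = a}, FH (gbar a) ≤ gbar ⟨n (F a.val), hidem _⟩) := by
  -- g is monotone
  have gmono : Monotone g := by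
    intro a b hab
    have h2 : g (sSup {a, b}) = sSup (g '' {a, b}) := hg _
    rw [Set.image_pair, sSup_pair, sSup_pair, sup_eq_right.mpr hab] at h2
    rw [h2]; exact le_sup_left
  -- key: g (n a) = g a
  have gn : ∀ a, g (n a) = g a := by
    intro a
    refine le_antisymm ?_ (gmono (by rw [hn]; exact le_sInf fun x hx => hx.2))
    set m : G := sSup {b | g b ≤ g a} with hm
    have hgm : g m ≤ g a := by
      rw [hm, hg]
      exact sSup_le fun y ⟨b, hb, hby⟩ => hby ▸ hb
    have ham : a ≤ m := le_sSup le_rfl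
    have hfix : jX m = m := by
      have hle : g (jX m) ≤ g a := by
        rw [hjX]
        have : g (m ⊔ sSup {c | ∃ d, d ≤ m ∧ ((c, d) ∈ X ∨ (d, c) ∈ X)})
            = g m ⊔ g (sSup {c | ∃ d, d ≤ m ∧ ((c, d) ∈ X ∨ (d, c) ∈ X)}) := by
          have h2 : g (sSup {m, sSup {c | ∃ d, d ≤ m ∧ ((c, d) ∈ X ∨ (d, c) ∈ X)}})
              = sSup (g '' {m, sSup {c | ∃ d, d ≤ m ∧ ((c, d) ∈ X ∨ (d, c) ∈ X)}}) := hg _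
          rwa [Set.image_pair, sSup_pair, sSup_pair] at h2
        rw [this]
        refine sup_le hgm ?_
        rw [hg]
        refine sSup_le ?_
        rintro y ⟨c, ⟨d, hdm, hcd⟩, rfl⟩
        have hcd' : g c = g d := by
          rcases hcd with h | h
          · exact hgX _ _ h
          · exact (hgX _ _ h).symm
        calc g c = g d := hcd'
          _ ≤ g m := gmono hdm
          _ ≤ g a := hgm
      refine le_antisymm (le_sSup hle) ?_
      rw [hjX]; exact le_sup_left
    have hnm : n a ≤ m := by
      rw [hn]; exact sInf_le ⟨hfix, ham⟩
    exact le_trans (gmono hnm) hgm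
  refine ⟨fun p => g p.val, ⟨fun a => (gn a).symm, ?_, ?_⟩, ?_⟩
  · intro M
    show g (n (sSup (Subtype.val '' M))) = _
    rw [gn, hg, Set.image_image]
  · intro a
    show FH (g a.val) ≤ g (n (F a.val))
    rw [gn]; exact hglax _
  · rintro gbar' ⟨h1, -, -⟩
    funext p
    obtain ⟨a, ha⟩ := p
    have h2 := h1 a
    have h3 : (⟨n a, hidem a⟩ : {a : G // n a = a}) = ⟨a, ha⟩ := Subtype.ext ha
    rw [h3] at h2
    exact h2.symm
end

section
/- Let H₁ = (G₁, F₁), H₂ = (G₂, F₂) be F-sup-semilattices, L a sup-semilattice, and f : G₁ → G₂ a lax morphism of F-sup-semilattices (f preserves all joins and F₂(f(x)) ≤ f(F₁(x)) for all x). Then precomposition with f, α ↦ α ∘ f, is a frame homomorphism J[H₂, L] → J[H₁, L]: if β(x) ≤ α(F₂(x)) for all x ∈ G₂, then (β ∘ f)(x) ≤ (α ∘ f)(F₁(x)) for all x ∈ G₁. -/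
theorem stmt_13 {G₁ G₂ L : Type*} [CompleteLattice G₁] [CompleteLattice G₂] [CompleteLattice L]
    (F₁ : G₁ → G₁) (F₂ : G₂ → G₂)
    (hF₁ : ∀ X : Set G₁, F₁ (sSup X) = sSup (F₁ '' X))
    (hF₂ : ∀ X : Set G₂, F₂ (sSup X) = sSup (F₂ '' X))
    (f : G₁ → G₂)
    (hf : ∀ X : Set G₁, f (sSup X) = sSup (f '' X))
    (hflax : ∀ x, F₂ (f x) ≤ f (F₁ x))
    (α β : G₂ → L)
    (hα : ∀ X : Set G₂, α (sSup X) = sSup (α '' X))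
    (hβ : ∀ X : Set G₂, β (sSup X) = sSup (β '' X))
    (hS : ∀ x, β x ≤ α (F₂ x)) :
    (∀ X : Set G₁, (α ∘ f) (sSup X) = sSup ((α ∘ f) '' X)) ∧
    (∀ x : G₁, (β ∘ f) x ≤ (α ∘ f) (F₁ x)) := by
  have hmono : Monotone α := by
    intro a b hab
    have h1 : sSup ({a, b} : Set G₂) = b := by
      simp [sSup_insert, sup_eq_right.mpr hab]
    have := hα {a, b}
    rw [h1] at this
    rw [this]
    exact le_sSup ⟨a, by simp⟩
  constructor
  · intro X
    rw [Function.comp_apply, hf X, hα, Set.image_image]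
    rfl
  · intro x
    exact (hS (f x)).trans (hmono (hflax x))
end

section
/- Let H = (G, F) be an F-sup-semilattice and L a complete lattice. Define μ_H : G → L^{T_{[H,L]}} by (μ_H(x))(α) = α(x), where T_{[H,L]} is the set of join-preserving maps G → L. Then μ_H preserves all joins and is a lax morphism of F-sup-semilattices: F^{J[H,L]}(μ_H(x)) ≤ μ_H(F(x)) for all x ∈ G, where (F^{J[H,L]}(y))(α) = ⋁{y(β) | α S_{[H,L]} β} and α S_{[H,L]} β iff β(z) ≤ α(F(z)) for all z ∈ G. -/
/-- The set of join-preserving maps from `G` to `L`. -/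
def JP (G L : Type*) [CompleteLattice G] [CompleteLattice L] :=
  {α : G → L // ∀ Y : Set G, α (sSup Y) = sSup (α '' Y)}

theorem stmt_15 {G L : Type*} [CompleteLattice G] [CompleteLattice L]
    (F : G → G) (hF : ∀ X : Set G, F (sSup X) = sSup (F '' X)) :
    (∀ X : Set G,
      (fun (α : JP G L) => α.val (sSup X)) =
        sSup ((fun (x : G) (α : JP G L) => α.val x) '' X)) ∧
    (∀ (x : G) (α : JP G L),
      sSup {y | ∃ β : JP G L, (∀ z, β.val z ≤ α.val (F z)) ∧ y = β.val x}
        ≤ α.val (F x)) := by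
  constructor
  · intro X
    funext α
    rw [α.prop X, sSup_apply]
    apply le_antisymm
    · apply sSup_le
      rintro y ⟨x, hx, rfl⟩
      exact le_iSup_of_le ⟨_, ⟨x, hx, rfl⟩⟩ le_rfl
    · apply iSup_le
      rintro ⟨f, ⟨x, hx, rfl⟩⟩
      exact le_sSup ⟨x, hx, rfl⟩
  · intro x α
    apply sSup_le
    rintro y ⟨β, hβ, rfl⟩
    exact hβ x
end
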